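/- Let a, κ, α > 0 and B as above, and let μ(κ) > 0 solve 2∫_a^∞ κα B(x) exp(−μx − κα∫_a^x B(y)dy) dx = 1. Then μ(κ) → (log 2)/a as κ → ∞. -/

import Mathlib

open Real Set MeasureTheory Filter Topology
open scoped ENNReal

private lemma BintOn {C : ℝ} {B : ℝ → ℝ} (hB : Measurable B)
    (hB0 : ∀ x, 0 ≤ x → 0 ≤ B x) (hBC : ∀ x, B x ≤ C)
    {s t : ℝ} (hs : 0 ≤ s) : IntegrableOn B (Set.Ioc s t) := by
  refine Integrable.mono' (g := fun _ => C) ?_ ?_ ?_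
  · exact integrableOn_const measure_Ioc_lt_top.ne
  · exact hB.aestronglyMeasurable.restrict
  · refine (ae_restrict_iff' measurableSet_Ioc).2 (Filter.Eventually.of_forall fun x hx => ?_)
    rw [Real.norm_eq_abs, abs_of_nonneg (hB0 x (hs.trans hx.1.le))]
    exact hBC x

private lemma Fadd {a : ℝ} {C : ℝ} {B F : ℝ → ℝ} (ha : 0 < a) (hB : Measurable B)
    (hB0 : ∀ x, 0 ≤ x → 0 ≤ B x) (hBC : ∀ x, B x ≤ C)
    (hFdef : ∀ x, F x = ∫ y in Set.Ioc a x, B y)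
    {s t : ℝ} (has : a ≤ s) (hst : s ≤ t) :
    F t = F s + ∫ y in Set.Ioc s t, B y := by
  rw [hFdef t, hFdef s, ← Set.Ioc_union_Ioc_eq_Ioc has hst,
    MeasureTheory.setIntegral_union (Set.Ioc_disjoint_Ioc_of_le le_rfl) measurableSet_Ioc
      (BintOn hB hB0 hBC ha.le) (BintOn hB hB0 hBC (ha.le.trans has))]

private lemma seg_nonneg {a : ℝ} {B : ℝ → ℝ} (ha : 0 < a)
    (hB0 : ∀ x, 0 ≤ x → 0 ≤ B x)
    {s t : ℝ} (has : a ≤ s) :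
    0 ≤ ∫ y in Set.Ioc s t, B y :=
  setIntegral_nonneg measurableSet_Ioc fun x hx => hB0 x (by linarith [hx.1])

private lemma seg_le {a C : ℝ} {B : ℝ → ℝ} (ha : 0 < a) (hB : Measurable B)
    (hB0 : ∀ x, 0 ≤ x → 0 ≤ B x) (hBC : ∀ x, B x ≤ C)
    {s t : ℝ} (has : a ≤ s) (hst : s ≤ t) :
    (∫ y in Set.Ioc s t, B y) ≤ C * (t - s) := by
  calc (∫ y in Set.Ioc s t, B y) ≤ ∫ _y in Set.Ioc s t, C := by
        apply setIntegral_mono_on (BintOn hB hB0 hBC (ha.le.trans has))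
          (integrableOn_const measure_Ioc_lt_top.ne) measurableSet_Ioc
        exact fun x _ => hBC x
    _ = C * (t - s) := by
        rw [setIntegral_const, measureReal_def, Real.volume_Ioc, smul_eq_mul,
          ENNReal.toReal_ofReal (by linarith)]
        ring

private lemma F0 {a C : ℝ} {B F : ℝ → ℝ} (ha : 0 < a) (hB : Measurable B)
    (hB0 : ∀ x, 0 ≤ x → 0 ≤ B x) (hBC : ∀ x, B x ≤ C)
    (hFdef : ∀ x, F x = ∫ y in Set.Ioc a x, B y)
    {x : ℝ} (hx : a ≤ x) : 0 ≤ F x := by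
  have h := Fadd ha hB hB0 hBC hFdef le_rfl hx
  have h0 : F a = 0 := by rw [hFdef]; simp [Set.Ioc_self]
  rw [h, h0, zero_add]
  exact seg_nonneg ha hB0 le_rfl

private lemma Fmono {a C : ℝ} {B F : ℝ → ℝ} (ha : 0 < a) (hB : Measurable B)
    (hB0 : ∀ x, 0 ≤ x → 0 ≤ B x) (hBC : ∀ x, B x ≤ C)
    (hFdef : ∀ x, F x = ∫ y in Set.Ioc a x, B y)
    {s t : ℝ} (has : a ≤ s) (hst : s ≤ t) : F s ≤ F t := by
  have h := Fadd ha hB hB0 hBC hFdef has hst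
  have h0 := seg_nonneg ha hB0 has (t := t)
  linarith

private lemma FcontOn {a C : ℝ} {B F : ℝ → ℝ} (ha : 0 < a) (hC : 0 < C) (hB : Measurable B)
    (hB0 : ∀ x, 0 ≤ x → 0 ≤ B x) (hBC : ∀ x, B x ≤ C)
    (hFdef : ∀ x, F x = ∫ y in Set.Ioc a x, B y) :
    ContinuousOn F (Set.Ici a) := by
  have hlip : LipschitzOnWith C.toNNReal F (Set.Ici a) := by
    rw [lipschitzOnWith_iff_dist_le_mul]
    have key : ∀ s ∈ Set.Ici a, ∀ t ∈ Set.Ici a, t ≤ s →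
        dist (F s) (F t) ≤ C.toNNReal * dist s t := by
      intro s hs t ht hts
      have hadd := Fadd ha hB hB0 hBC hFdef ht hts
      have h0 := seg_nonneg ha hB0 ht (t := s)
      have hle := seg_le ha hB hB0 hBC ht hts
      rw [Real.dist_eq, Real.dist_eq, abs_of_nonneg (by linarith),
        abs_of_nonneg (by linarith), Real.coe_toNNReal _ hC.le]
      linarith
    intro s hs t ht
    rcases le_total t s with h | h
    · exact key s hs t ht h
    · rw [dist_comm (F s) (F t), dist_comm s t]
      exact key t ht s hs h
  exact hlip.continuousOn

private lemma gintOn {a c C : ℝ} {B F : ℝ → ℝ} (ha : 0 < a) (hc : 0 < c) (hC : 0 < C)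
    (hB : Measurable B) (hB0 : ∀ x, 0 ≤ x → 0 ≤ B x) (hBC : ∀ x, B x ≤ C)
    (hFdef : ∀ x, F x = ∫ y in Set.Ioc a x, B y)
    {s t : ℝ} (hs : a ≤ s) :
    IntegrableOn (fun x => c * B x * Real.exp (-(c * F x))) (Set.Ioc s t) := by
  have hcont : ContinuousOn (fun x => Real.exp (-(c * F x))) (Set.Ici a) :=
    Real.continuous_exp.comp_continuousOn
      ((continuousOn_const.mul (FcontOn ha hC hB hB0 hBC hFdef)).neg)
  have hsub : Set.Ioc s t ⊆ Set.Ici a := fun x hx => (hs.trans hx.1.le)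
  have hmeas : AEStronglyMeasurable (fun x => c * B x * Real.exp (-(c * F x)))
      (volume.restrict (Set.Ioc s t)) := by
    have h1 : AEStronglyMeasurable (fun x => Real.exp (-(c * F x)))
        (volume.restrict (Set.Ioc s t)) :=
      (hcont.aestronglyMeasurable measurableSet_Ici).mono_measure
        (Measure.restrict_mono hsub le_rfl)
    exact ((hB.const_mul c).aestronglyMeasurable.restrict.mul h1)
  refine Integrable.mono' (g := fun _ => c * C) ?_ hmeas ?_
  · exact integrableOn_const measure_Ioc_lt_top.ne
  · refine (ae_restrict_iff' measurableSet_Ioc).2 (Filter.Eventually.of_forall fun x hx => ?_)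
    have hax : a ≤ x := hs.trans hx.1.le
    have hBx : 0 ≤ B x := hB0 x (by linarith)
    have hFx : 0 ≤ F x := F0 ha hB hB0 hBC hFdef hax
    have he1 : Real.exp (-(c * F x)) ≤ 1 := Real.exp_le_one_iff.2 (by nlinarith)
    have he0 : 0 < Real.exp (-(c * F x)) := Real.exp_pos _
    rw [Real.norm_eq_abs, abs_of_nonneg (by positivity)]
    show c * B x * Real.exp (-(c * F x)) ≤ c * C
    have h1 : c * B x * Real.exp (-(c * F x)) ≤ c * B x * 1 :=
      mul_le_mul_of_nonneg_left he1 (by positivity)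
    have h2 : c * B x ≤ c * C := mul_le_mul_of_nonneg_left (hBC x) hc.le
    linarith

private lemma arith_step {eu ed d S E : ℝ} (heu0 : 0 < eu) (heu1 : eu ≤ 1)
    (hed0 : 0 < ed) (hed1 : 1 - d ≤ ed) (hedk : ed * (1 + d) ≤ 1) (hd0 : 0 ≤ d)
    (hSub : S ≤ eu * d) (hSlb : eu * ed * d ≤ S)
    (hE : E = (eu * ed - eu) + S) : |E| ≤ d * d := by
  rw [abs_le]
  constructor
  · have hZ : -(d * d) ≤ ed * (1 + d) - 1 := by nlinarith
    have h4 : eu * (-(d * d)) ≤ eu * (ed * (1 + d) - 1) :=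
      mul_le_mul_of_nonneg_left hZ heu0.le
    have h5 : -(d * d) ≤ eu * (-(d * d)) := by nlinarith
    nlinarith
  · have hX0 : 0 ≤ ed - 1 + d := by linarith
    have hXd : ed - 1 + d ≤ d * d := by nlinarith
    have h4 : eu * (ed - 1 + d) ≤ 1 * (d * d) := by nlinarith
    nlinarith


private lemma telescope {K : ℝ} (Φ : ℝ → ℝ) (a M : ℝ) (haM : a ≤ M) (hK : 0 ≤ K)
    (hstep : ∀ s t : ℝ, a ≤ s → s ≤ t → |Φ t - Φ s| ≤ (K * (t - s))^2)
    (hΦa : Φ a = 1) : Φ M = 1 := by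
  have hΦM1 : ∀ n : ℕ, 0 < n → |Φ M - 1| ≤ (K * (M - a))^2 / n := by
    intro n hn
    have hn0 : (0:ℝ) < n := by exact_mod_cast hn
    set h : ℝ := (M - a) / n with hhdef
    have hh0 : 0 ≤ h := div_nonneg (by linarith) hn0.le
    set x : ℕ → ℝ := fun i => a + i * h with hxdef
    have hxa : ∀ i : ℕ, a ≤ x i := fun i =>
      le_add_of_nonneg_right (mul_nonneg i.cast_nonneg hh0)
    have hxstep : ∀ i : ℕ, x (i+1) - x i = h := by
      intro i
      simp only [hxdef]
      push_cast
      ring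
    have hxmono : ∀ i : ℕ, x i ≤ x (i+1) := fun i => by linarith [hxstep i]
    have hxn : x n = M := by
      simp only [hxdef, hhdef]
      field_simp
      ring
    have key1 : Φ M - 1 = ∑ i ∈ Finset.range n, (Φ (x (i+1)) - Φ (x i)) := by
      rw [Finset.sum_range_sub (fun i => Φ (x i)), hxn]
      have hx0 : x 0 = a := by simp [hxdef]
      rw [hx0, hΦa]
    rw [key1]
    calc |∑ i ∈ Finset.range n, (Φ (x (i+1)) - Φ (x i))|
        ≤ ∑ i ∈ Finset.range n, |Φ (x (i+1)) - Φ (x i)| :=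
          Finset.abs_sum_le_sum_abs _ _
      _ ≤ ∑ _i ∈ Finset.range n, (K * h)^2 := by
          apply Finset.sum_le_sum
          intro i _
          have := hstep (x i) (x (i+1)) (hxa i) (hxmono i)
          rwa [hxstep i] at this
      _ = n * (K * h)^2 := by
          rw [Finset.sum_const, Finset.card_range, nsmul_eq_mul]
      _ = (K * (M - a))^2 / n := by
          rw [hhdef]
          field_simp
  have htend : Tendsto (fun n : ℕ => (K * (M - a))^2 / n) atTop (𝓝 0) :=
    tendsto_const_div_atTop_nhds_zero_nat _
  have h0 : |Φ M - 1| ≤ 0 := by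
    refine ge_of_tendsto htend ?_
    filter_upwards [eventually_gt_atTop 0] with n hn
    exact hΦM1 n hn
  have h1 := abs_nonneg (Φ M - 1)
  have h2 := abs_eq_zero.1 (le_antisymm h0 h1)
  linarith


section Key
variable {a M c C : ℝ} {B F : ℝ → ℝ}

private lemma key_identity (ha : 0 < a) (haM : a ≤ M) (hc : 0 < c) (hC : 0 < C)
    (hB : Measurable B) (hB0 : ∀ x, 0 ≤ x → 0 ≤ B x) (hBC : ∀ x, B x ≤ C)
    (hFdef : ∀ x, F x = ∫ y in Set.Ioc a x, B y)
    (hFadd : ∀ {s t : ℝ}, a ≤ s → s ≤ t → F t = F s + ∫ y in Set.Ioc s t, B y)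
    (hseg0 : ∀ {s t : ℝ}, a ≤ s → 0 ≤ ∫ y in Set.Ioc s t, B y)
    (hsegC : ∀ {s t : ℝ}, a ≤ s → s ≤ t → (∫ y in Set.Ioc s t, B y) ≤ C * (t - s))
    (hF0 : ∀ {x : ℝ}, a ≤ x → 0 ≤ F x)
    (hBint2 : ∀ {s t : ℝ}, a ≤ s → IntegrableOn B (Set.Ioc s t))
    (hgint : ∀ {s t : ℝ}, a ≤ s →
      IntegrableOn (fun x => c * B x * Real.exp (-(c * F x))) (Set.Ioc s t)) :
    (∫ x in Set.Ioc a M, c * B x * Real.exp (-(c * F x)))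
      = 1 - Real.exp (-(c * F M)) := by
  set g : ℝ → ℝ := fun x => c * B x * Real.exp (-(c * F x)) with hgdef
  set Φ : ℝ → ℝ := fun N => Real.exp (-(c * F N)) + ∫ x in Set.Ioc a N, g x with hΦdef
  have hFa : F a = 0 := by rw [hFdef]; simp [Set.Ioc_self]
  have hΦa : Φ a = 1 := by simp [hΦdef, Set.Ioc_self, hFa]
  -- step estimate
  have hstep : ∀ s t : ℝ, a ≤ s → s ≤ t → |Φ t - Φ s| ≤ (c * C * (t - s))^2 := by
    intro s t has hst
    have hat : a ≤ t := has.trans hst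
    have hsegnn : 0 ≤ ∫ y in Set.Ioc s t, B y := hseg0 has
    have hsegle : (∫ y in Set.Ioc s t, B y) ≤ C * (t - s) := hsegC has hst
    set d : ℝ := c * ∫ y in Set.Ioc s t, B y with hddef
    have hd0 : 0 ≤ d := mul_nonneg hc.le hsegnn
    have hdle : d ≤ c * C * (t - s) := by rw [hddef]; nlinarith
    have hFts : F t = F s + ∫ y in Set.Ioc s t, B y := hFadd has hst
    have hFs0 : 0 ≤ F s := hF0 has
    have hsplit : (∫ x in Set.Ioc a t, g x)
        = (∫ x in Set.Ioc a s, g x) + ∫ x in Set.Ioc s t, g x := by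
      rw [← Set.Ioc_union_Ioc_eq_Ioc has hst,
        MeasureTheory.setIntegral_union (Set.Ioc_disjoint_Ioc_of_le le_rfl) measurableSet_Ioc
          (hgint le_rfl) (hgint has)]
    -- bounds on the middle integral
    have hBint' : IntegrableOn (fun x => c * B x) (Set.Ioc s t) :=
      (hBint2 has).const_mul c
    have hSub : (∫ x in Set.Ioc s t, g x) ≤ Real.exp (-(c * F s)) * d := by
      calc (∫ x in Set.Ioc s t, g x)
          ≤ ∫ x in Set.Ioc s t, Real.exp (-(c * F s)) * (c * B x) := by
            apply setIntegral_mono_on (hgint has) (hBint'.const_mul _) measurableSet_Ioc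
            intro x hx
            have haxx : a ≤ x := has.trans hx.1.le
            have hBx : 0 ≤ B x := hB0 x (by linarith)
            have hFsx : F s ≤ F x := by
              have h := hFadd has hx.1.le
              have h0 := hseg0 (t := x) has
              linarith
            have hee : Real.exp (-(c * F x)) ≤ Real.exp (-(c * F s)) :=
              Real.exp_le_exp.2 (by nlinarith)
            calc c * B x * Real.exp (-(c * F x)) ≤ c * B x * Real.exp (-(c * F s)) :=
                  mul_le_mul_of_nonneg_left hee (by positivity)
              _ = Real.exp (-(c * F s)) * (c * B x) := by ring
        _ = Real.exp (-(c * F s)) * d := by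
            rw [MeasureTheory.integral_const_mul, MeasureTheory.integral_const_mul, hddef]
    have hSlb : Real.exp (-(c * F t)) * d ≤ ∫ x in Set.Ioc s t, g x := by
      calc Real.exp (-(c * F t)) * d
          = ∫ x in Set.Ioc s t, Real.exp (-(c * F t)) * (c * B x) := by
            rw [MeasureTheory.integral_const_mul, MeasureTheory.integral_const_mul, hddef]
        _ ≤ ∫ x in Set.Ioc s t, g x := by
            apply setIntegral_mono_on (hBint'.const_mul _) (hgint has) measurableSet_Ioc
            intro x hx
            have haxx : a ≤ x := has.trans hx.1.le
            have hBx : 0 ≤ B x := hB0 x (by linarith)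
            have hFxt : F x ≤ F t := by
              have h := hFadd haxx hx.2
              have h0 := hseg0 (t := t) haxx
              linarith
            have hee : Real.exp (-(c * F t)) ≤ Real.exp (-(c * F x)) :=
              Real.exp_le_exp.2 (by nlinarith)
            calc Real.exp (-(c * F t)) * (c * B x)
                = c * B x * Real.exp (-(c * F t)) := by ring
              _ ≤ c * B x * Real.exp (-(c * F x)) :=
                  mul_le_mul_of_nonneg_left hee (by positivity)
    have hΦdiff : Φ t - Φ s
        = (Real.exp (-(c * F t)) - Real.exp (-(c * F s))) + ∫ x in Set.Ioc s t, g x := by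
      simp only [hΦdef]
      rw [hsplit]; ring
    have hvu : Real.exp (-(c * F t)) = Real.exp (-(c * F s)) * Real.exp (-d) := by
      rw [← Real.exp_add]
      congr 1
      rw [hFts, hddef]; ring
    set eu : ℝ := Real.exp (-(c * F s)) with heudef
    set ed : ℝ := Real.exp (-d) with heddef
    have heu0 : 0 < eu := Real.exp_pos _
    have heu1 : eu ≤ 1 := by
      rw [heudef]
      exact Real.exp_le_one_iff.2 (by nlinarith)
    have hed0 : 0 < ed := Real.exp_pos _
    have hed1 : 1 - d ≤ ed := by
      have := Real.add_one_le_exp (-d)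
      rw [heddef]; linarith
    have hedk : ed * (1 + d) ≤ 1 := by
      have h1 : 1 + d ≤ Real.exp d := by linarith [Real.add_one_le_exp d]
      have h2 : ed * (1 + d) ≤ ed * Real.exp d := by nlinarith
      have h3 : ed * Real.exp d = 1 := by
        rw [heddef, ← Real.exp_add]; simp
      linarith
    rw [hvu] at hSlb hΦdiff
    have habs : |Φ t - Φ s| ≤ d * d :=
      arith_step (S := ∫ x in Set.Ioc s t, g x) (E := Φ t - Φ s)
        heu0 heu1 hed0 hed1 hedk hd0 hSub hSlb hΦdiff
    have hd2 : d * d ≤ (c * C * (t - s))^2 := by nlinarith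
    linarith
  have hΦMeq : Φ M = 1 :=
    telescope Φ a M haM (by positivity) hstep hΦa
  have : Real.exp (-(c * F M)) + ∫ x in Set.Ioc a M, g x = 1 := hΦMeq
  linarith

end Key

theorem stmt_17 (a α : ℝ) (ha : 0 < a) (hα : 0 < α)
    (B : ℝ → ℝ) (hBm : Measurable B) (hBpos : ∀ x : ℝ, 0 ≤ x → 0 < B x)
    (hBbd : ∃ C : ℝ, ∀ x : ℝ, B x ≤ C)
    (hBint : ¬ MeasureTheory.IntegrableOn B (Set.Ioi a))
    (μ : ℝ → ℝ)
    (hμ : ∀ κ : ℝ, 0 < κ → 0 < μ κ ∧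
      (2 * ∫ x in Set.Ioi a,
          κ * α * B x * Real.exp (-(μ κ) * x - κ * α * ∫ y in a..x, B y)) = 1) :
    Filter.Tendsto μ Filter.atTop (nhds (Real.log 2 / a)) := by
  obtain ⟨C₀, hC₀⟩ := hBbd
  set C : ℝ := max C₀ 1 with hCdef
  have hC : (0:ℝ) < C := lt_max_of_lt_right one_pos
  have hBC : ∀ x, B x ≤ C := fun x => le_max_of_le_left (hC₀ x)
  have hB0 : ∀ x, 0 ≤ x → 0 ≤ B x := fun x hx => (hBpos x hx).le
  set F : ℝ → ℝ := fun x => ∫ y in Set.Ioc a x, B y with hFset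
  have hFdef : ∀ x, F x = ∫ y in Set.Ioc a x, B y := fun x => rfl
  set L : ℝ := Real.log 2 / a with hLdef
  have hlog2 : 0 < Real.log 2 := Real.log_pos (by norm_num)
  have hL0 : 0 < L := div_pos hlog2 ha
  -- key per-κ facts
  have main : ∀ κ : ℝ, 0 < κ →
      (1/2 ≤ Real.exp (-(μ κ * a))) ∧
      (∀ M, a < M →
        Real.exp (-(μ κ * M)) * (1 - Real.exp (-(κ * α * F M))) ≤ 1/2) := by
    intro κ hκ
    obtain ⟨hμpos, heq⟩ := hμ κ hκ
    have hc : 0 < κ * α := mul_pos hκ hα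
    set f : ℝ → ℝ := fun x => κ * α * B x * Real.exp (-(μ κ) * x - κ * α * F x) with hfdef
    have hIeq : (∫ x in Set.Ioi a, f x) = 1/2 := by
      have hcongr : (∫ x in Set.Ioi a,
          κ * α * B x * Real.exp (-(μ κ) * x - κ * α * ∫ y in a..x, B y))
          = ∫ x in Set.Ioi a, f x := by
        apply setIntegral_congr_fun measurableSet_Ioi
        intro x hx
        show κ * α * B x * Real.exp (-(μ κ) * x - κ * α * ∫ y in a..x, B y)
            = κ * α * B x * Real.exp (-(μ κ) * x - κ * α * F x)
        rw [hFdef x, intervalIntegral.integral_of_le (le_of_lt hx)]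
      rw [hcongr] at heq
      linarith
    have hfi : IntegrableOn f (Set.Ioi a) := by
      by_contra h
      rw [MeasureTheory.integral_undef h] at hIeq
      norm_num at hIeq
    have hfnn : ∀ x ∈ Set.Ioi a, 0 ≤ f x := by
      intro x hx
      have hBx : 0 ≤ B x := hB0 x (by simp only [Set.mem_Ioi] at hx; linarith)
      rw [hfdef]
      positivity
    have hfae : 0 ≤ᵐ[volume.restrict (Set.Ioi a)] f :=
      (ae_restrict_iff' measurableSet_Ioi).2 (Filter.Eventually.of_forall hfnn)
    -- auxiliary facts for key_identity
    have hFadd' : ∀ {s t : ℝ}, a ≤ s → s ≤ t → F t = F s + ∫ y in Set.Ioc s t, B y :=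
      fun {s t} has hst => Fadd ha hBm hB0 hBC hFdef has hst
    have hseg0' : ∀ {s t : ℝ}, a ≤ s → 0 ≤ ∫ y in Set.Ioc s t, B y :=
      fun {s t} has => seg_nonneg ha hB0 has
    have hsegC' : ∀ {s t : ℝ}, a ≤ s → s ≤ t → (∫ y in Set.Ioc s t, B y) ≤ C * (t - s) :=
      fun {s t} has hst => seg_le ha hBm hB0 hBC has hst
    have hF0' : ∀ {x : ℝ}, a ≤ x → 0 ≤ F x :=
      fun {x} hx => F0 ha hBm hB0 hBC hFdef hx
    have hBint2' : ∀ {s t : ℝ}, a ≤ s → IntegrableOn B (Set.Ioc s t) :=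
      fun {s t} has => BintOn hBm hB0 hBC (ha.le.trans has)
    have hgint' : ∀ {s t : ℝ}, a ≤ s →
        IntegrableOn (fun x => κ * α * B x * Real.exp (-(κ * α * F x))) (Set.Ioc s t) :=
      fun {s t} has => gintOn ha hc hC hBm hB0 hBC hFdef has
    have hkey : ∀ M, a ≤ M →
        (∫ x in Set.Ioc a M, κ * α * B x * Real.exp (-(κ * α * F x)))
          = 1 - Real.exp (-(κ * α * F M)) :=
      fun M haM => key_identity ha haM hc hC hBm hB0 hBC hFdef
        hFadd' hseg0' hsegC' hF0' hBint2' hgint'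
    constructor
    · -- upper bound : 1/2 ≤ exp (-(μ κ * a))
      have hunion : (⋃ n : ℕ, Set.Ioc a (a + n)) = Set.Ioi a := by
        ext x
        simp only [Set.mem_iUnion, Set.mem_Ioc, Set.mem_Ioi]
        constructor
        · rintro ⟨n, h1, _⟩; exact h1
        · intro hx
          obtain ⟨n, hn⟩ := exists_nat_ge (x - a)
          exact ⟨n, hx, by linarith⟩
      have hmono : Monotone (fun n : ℕ => Set.Ioc a (a + n)) := by
        intro m n hmn
        apply Set.Ioc_subset_Ioc le_rfl
        have : (m:ℝ) ≤ n := Nat.cast_le.2 hmn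
        linarith
      have htend := MeasureTheory.tendsto_setIntegral_of_monotone
        (fun n : ℕ => measurableSet_Ioc) hmono (by rw [hunion]; exact hfi)
      rw [hunion] at htend
      have hbd : ∀ n : ℕ, (∫ x in Set.Ioc a (a + n), f x) ≤ Real.exp (-(μ κ * a)) := by
        intro n
        have haan : a ≤ a + n := le_add_of_nonneg_right n.cast_nonneg
        calc (∫ x in Set.Ioc a (a + n), f x)
            ≤ ∫ x in Set.Ioc a (a + n),
                Real.exp (-(μ κ * a)) * (κ * α * B x * Real.exp (-(κ * α * F x))) := by
              apply setIntegral_mono_on (hfi.mono_set Set.Ioc_subset_Ioi_self)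
                ((hgint' le_rfl).const_mul _) measurableSet_Ioc
              intro x hx
              have hBx : 0 ≤ B x := hB0 x (by linarith [hx.1])
              have hexp : Real.exp (-(μ κ) * x - κ * α * F x)
                  ≤ Real.exp (-(μ κ * a)) * Real.exp (-(κ * α * F x)) := by
                rw [← Real.exp_add]
                apply Real.exp_le_exp.2
                have : μ κ * a ≤ μ κ * x := mul_le_mul_of_nonneg_left hx.1.le hμpos.le
                linarith
              calc κ * α * B x * Real.exp (-(μ κ) * x - κ * α * F x)
                  ≤ κ * α * B x * (Real.exp (-(μ κ * a)) * Real.exp (-(κ * α * F x))) :=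
                    mul_le_mul_of_nonneg_left hexp (by positivity)
                _ = Real.exp (-(μ κ * a)) * (κ * α * B x * Real.exp (-(κ * α * F x))) := by
                    ring
          _ = Real.exp (-(μ κ * a)) * (1 - Real.exp (-(κ * α * F (a + n)))) := by
              rw [MeasureTheory.integral_const_mul, hkey _ haan]
          _ ≤ Real.exp (-(μ κ * a)) * 1 := by
              apply mul_le_mul_of_nonneg_left _ (Real.exp_pos _).le
              have := (Real.exp_pos (-(κ * α * F (a + n)))).le
              linarith
          _ = Real.exp (-(μ κ * a)) := mul_one _
      have hlim : (∫ x in Set.Ioi a, f x) ≤ Real.exp (-(μ κ * a)) :=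
        le_of_tendsto htend (Filter.Eventually.of_forall hbd)
      linarith [hIeq ▸ hlim]
    · -- lower bound
      intro M haM
      calc Real.exp (-(μ κ * M)) * (1 - Real.exp (-(κ * α * F M)))
          = ∫ x in Set.Ioc a M,
              Real.exp (-(μ κ * M)) * (κ * α * B x * Real.exp (-(κ * α * F x))) := by
            rw [MeasureTheory.integral_const_mul, hkey M haM.le]
        _ ≤ ∫ x in Set.Ioc a M, f x := by
            apply setIntegral_mono_on ((hgint' le_rfl).const_mul _)
              (hfi.mono_set Set.Ioc_subset_Ioi_self) measurableSet_Ioc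
            intro x hx
            have hBx : 0 ≤ B x := hB0 x (by linarith [hx.1])
            have hexp : Real.exp (-(μ κ * M)) * Real.exp (-(κ * α * F x))
                ≤ Real.exp (-(μ κ) * x - κ * α * F x) := by
              rw [← Real.exp_add]
              apply Real.exp_le_exp.2
              have : μ κ * x ≤ μ κ * M := mul_le_mul_of_nonneg_left hx.2 hμpos.le
              linarith
            calc Real.exp (-(μ κ * M)) * (κ * α * B x * Real.exp (-(κ * α * F x)))
                = κ * α * B x * (Real.exp (-(μ κ * M)) * Real.exp (-(κ * α * F x))) := by
                  ring
              _ ≤ κ * α * B x * Real.exp (-(μ κ) * x - κ * α * F x) :=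
                  mul_le_mul_of_nonneg_left hexp (by positivity)
        _ ≤ ∫ x in Set.Ioi a, f x :=
            setIntegral_mono_set hfi hfae Set.Ioc_subset_Ioi_self.eventuallyLE
        _ = 1/2 := hIeq
  -- conclude the limit
  rw [tendsto_order]
  constructor
  · intro b hb
    rcases le_or_gt b 0 with hb0 | hb0
    · filter_upwards [eventually_gt_atTop 0] with κ hκ
      exact lt_of_le_of_lt hb0 (hμ κ hκ).1
    · set b' : ℝ := (b + L)/2 with hb'def
      have hbb' : b < b' := by rw [hb'def]; linarith
      have hb'L : b' < L := by rw [hb'def]; linarith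
      have hb'0 : 0 < b' := by linarith
      set M : ℝ := Real.log 2 / b' with hMdef
      have hM0 : 0 < M := div_pos hlog2 hb'0
      have haM : a < M := by
        rw [hMdef, lt_div_iff₀ hb'0]
        have hLa : L * a = Real.log 2 := by
          rw [hLdef]; field_simp
        nlinarith
      have hb'M : b' * M = Real.log 2 := by
        rw [hMdef]; field_simp
      have hFM : 0 < F M := by
        rw [hFdef]
        rw [setIntegral_pos_iff_support_of_nonneg_ae]
        · have hsub : Set.Ioc a M ⊆ Function.support B ∩ Set.Ioc a M := by
            intro x hx
            exact ⟨(hBpos x (by linarith [hx.1])).ne', hx⟩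
          calc (0 : ENNReal) < volume (Set.Ioc a M) := by
                rw [Real.volume_Ioc]
                exact ENNReal.ofReal_pos.2 (by linarith)
            _ ≤ volume (Function.support B ∩ Set.Ioc a M) := measure_mono hsub
        · exact (ae_restrict_iff' measurableSet_Ioc).2
            (Filter.Eventually.of_forall fun x hx => hB0 x (by linarith [hx.1]))
        · exact BintOn hBm hB0 hBC ha.le
      have hαF : 0 < α * F M := mul_pos hα hFM
      have hδ : Tendsto (fun κ : ℝ => Real.exp (-(κ * α * F M))) atTop (𝓝 0) := by
        have h1 : Tendsto (fun κ : ℝ => κ * (α * F M)) atTop atTop :=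
          Tendsto.atTop_mul_const hαF tendsto_id
        have h2 : Tendsto (fun κ : ℝ => -(κ * (α * F M))) atTop atBot :=
          tendsto_neg_atTop_atBot.comp h1
        have h3 := Real.tendsto_exp_atBot.comp h2
        have heq : (fun κ : ℝ => Real.exp (-(κ * α * F M)))
            = (Real.exp ∘ fun κ : ℝ => -(κ * (α * F M))) := by
          funext κ
          show Real.exp (-(κ * α * F M)) = Real.exp (-(κ * (α * F M)))
          rw [mul_assoc]
        rw [heq]
        exact h3
      have hδhalf : ∀ᶠ κ : ℝ in atTop, Real.exp (-(κ * α * F M)) < 1/2 :=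
        hδ.eventually (eventually_lt_nhds (by norm_num))
      have hlogtend : Tendsto (fun κ : ℝ => Real.log (1 - Real.exp (-(κ * α * F M))))
          atTop (𝓝 0) := by
        have h1 : Tendsto (fun κ : ℝ => 1 - Real.exp (-(κ * α * F M))) atTop (𝓝 1) := by
          have hconst : Tendsto (fun _ : ℝ => (1:ℝ)) atTop (𝓝 1) := tendsto_const_nhds
          simpa using hconst.sub hδ
        have h2 := (Real.continuousAt_log one_ne_zero).tendsto.comp h1
        simpa [Function.comp_def] using h2
      have hbbM : (b - b') * M < 0 := mul_neg_of_neg_of_pos (by linarith) hM0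
      have hlogev : ∀ᶠ κ : ℝ in atTop,
          (b - b') * M < Real.log (1 - Real.exp (-(κ * α * F M))) :=
        hlogtend.eventually (eventually_gt_nhds hbbM)
      filter_upwards [eventually_gt_atTop 0, hδhalf, hlogev] with κ hκ0 hδκ hlogκ
      have h1 := (main κ hκ0).2 M haM
      set δ : ℝ := Real.exp (-(κ * α * F M)) with hδdef
      have hδ1 : δ < 1/2 := hδκ
      have hδ0 : 0 < δ := Real.exp_pos _
      have h2 : 2 * (1 - δ) ≤ Real.exp (μ κ * M) := by
        have hepos : 0 < Real.exp (μ κ * M) := Real.exp_pos _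
        have hrw : Real.exp (-(μ κ * M)) = (Real.exp (μ κ * M))⁻¹ := Real.exp_neg _
        rw [hrw] at h1
        have := (inv_mul_le_iff₀ hepos).1 h1
        linarith
      have h3 : Real.log (2 * (1 - δ)) ≤ μ κ * M := by
        have hpos : 0 < 2 * (1 - δ) := by linarith
        calc Real.log (2 * (1 - δ)) ≤ Real.log (Real.exp (μ κ * M)) :=
              Real.log_le_log hpos h2
          _ = μ κ * M := Real.log_exp _
      have h4 : Real.log (2 * (1 - δ)) = Real.log 2 + Real.log (1 - δ) :=
        Real.log_mul (by norm_num) (by linarith)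
      have h5 : b * M < μ κ * M := by
        have : Real.log 2 = b' * M := hb'M.symm
        rw [h4, this] at h3
        nlinarith
      exact lt_of_mul_lt_mul_right h5 hM0.le
  · intro b hb
    filter_upwards [eventually_gt_atTop 0] with κ hκ
    have h := (main κ hκ).1
    have h2 : Real.log (1/2) ≤ -(μ κ * a) := by
      calc Real.log (1/2) ≤ Real.log (Real.exp (-(μ κ * a))) :=
            Real.log_le_log (by norm_num) h
        _ = -(μ κ * a) := Real.log_exp _
    have h3 : Real.log (1/2) = -Real.log 2 := by
      rw [one_div, Real.log_inv]
    have h4 : μ κ * a ≤ Real.log 2 := by rw [h3] at h2; linarith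
    have h5 : μ κ ≤ L := by
      rw [hLdef, le_div_iff₀ ha]
      exact h4
    linarith
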